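/- Let α > 0, ξ > 0, and let t ↦ (y(t), z(t)) be a differentiable solution on an interval I of the reduced problem ẏ = e^z − 1, ż = ξ + e^z(αz − ξy − ξ). Then for all t ∈ I, d/dt H(y(t), z(t)) = ξ e^{−ξ y(t)} (e^{z(t)} − 1) z(t) (α − ξ). In particular, if α ≥ ξ then t ↦ H(y(t), z(t)) is nondecreasing, since (e^z − 1)z ≥ 0 for all z ∈ ℝ. -/

import Mathlib

/-- Along any solution of the reduced problem `ẏ = e^z − 1`,
`ż = ξ + e^z(αz − ξy − ξ)` on an interval, the function
`H(y,z) = −ξe^{−ξy}(y − z + 1 − e^{−z}) + 1 − e^{−ξy}` satisfies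
`d/dt H(y(t),z(t)) = ξ e^{−ξy}(e^z − 1)z(α − ξ)`; in particular `H` is nondecreasing
along solutions when `α ≥ ξ`, since `(e^z − 1)z ≥ 0` for all `z`. -/
theorem stmt_2 (α ξ : ℝ) (hα : 0 < α) (hξ : 0 < ξ) (H : ℝ → ℝ → ℝ)
    (hH : ∀ y z : ℝ, H y z =
      -ξ * Real.exp (-ξ * y) * (y - z + 1 - Real.exp (-z)) + 1 - Real.exp (-ξ * y))
    (y z : ℝ → ℝ) (s : Set ℝ) (hs : Convex ℝ s)
    (hy : ∀ t ∈ s, HasDerivAt y (Real.exp (z t) - 1) t)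
    (hz : ∀ t ∈ s, HasDerivAt z (ξ + Real.exp (z t) * (α * z t - ξ * y t - ξ)) t) :
    (∀ t ∈ s, HasDerivAt (fun t => H (y t) (z t))
      (ξ * Real.exp (-ξ * y t) * (Real.exp (z t) - 1) * z t * (α - ξ)) t) ∧
    (∀ w : ℝ, 0 ≤ (Real.exp w - 1) * w) ∧
    (ξ ≤ α → MonotoneOn (fun t => H (y t) (z t)) s) := by
  have key : ∀ t ∈ s, HasDerivAt (fun t => H (y t) (z t))
      (ξ * Real.exp (-ξ * y t) * (Real.exp (z t) - 1) * z t * (α - ξ)) t := by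
    intro t ht
    have hy' := hy t ht
    have hz' := hz t ht
    have E1 : HasDerivAt (fun t => Real.exp (-ξ * y t))
        (Real.exp (-ξ * y t) * (-ξ * (Real.exp (z t) - 1))) t :=
      (hy'.const_mul (-ξ)).exp
    have E2 : HasDerivAt (fun t => Real.exp (-z t))
        (Real.exp (-z t) * -(ξ + Real.exp (z t) * (α * z t - ξ * y t - ξ))) t :=
      hz'.neg.exp
    have P : HasDerivAt (fun t => y t - z t + 1 - Real.exp (-z t))
        ((Real.exp (z t) - 1) - (ξ + Real.exp (z t) * (α * z t - ξ * y t - ξ))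
          - Real.exp (-z t) * -(ξ + Real.exp (z t) * (α * z t - ξ * y t - ξ))) t :=
      ((hy'.sub hz').add_const 1).sub E2
    have M := ((E1.const_mul (-ξ)).mul P).add_const 1
    have F := M.sub E1
    have hfun : (fun t => H (y t) (z t)) = fun t =>
        -ξ * Real.exp (-ξ * y t) * (y t - z t + 1 - Real.exp (-z t)) + 1
          - Real.exp (-ξ * y t) := by
      funext t; exact hH (y t) (z t)
    rw [hfun]
    refine F.congr_deriv ?_
    have hvw : Real.exp (-z t) * Real.exp (z t) = 1 := by
      rw [← Real.exp_add]; simp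
    linear_combination (-1 : ℝ) * (ξ * Real.exp (-ξ * y t) * (α * z t - ξ * y t)) * hvw
  have key2 : ∀ w : ℝ, 0 ≤ (Real.exp w - 1) * w := by
    intro w
    rcases le_or_gt 0 w with hw | hw
    · exact mul_nonneg (sub_nonneg.2 (Real.one_le_exp hw)) hw
    · nlinarith [Real.exp_le_one_iff.2 hw.le]
  refine ⟨key, key2, fun hle => ?_⟩
  have hcont : ContinuousOn (fun t => H (y t) (z t)) s := fun x hx =>
    ((key x hx).continuousAt).continuousWithinAt
  have hdiff : DifferentiableOn ℝ (fun t => H (y t) (z t)) (interior s) := fun x hx =>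
    ((key x (interior_subset hx)).differentiableAt).differentiableWithinAt
  refine monotoneOn_of_deriv_nonneg hs hcont hdiff fun x hx => ?_
  rw [(key x (interior_subset hx)).deriv]
  have h1 := key2 (z x)
  have h2 : 0 ≤ ξ * Real.exp (-ξ * y x) := le_of_lt (mul_pos hξ (Real.exp_pos _))
  nlinarith [mul_nonneg (mul_nonneg h2 h1) (sub_nonneg.2 hle)]
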